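/- Let Q be a real n×n matrix. The following are equivalent: (i) for every x ≥ 0, the operator norm (with respect to the Euclidean norm on ℝⁿ) of the matrix exponential exp(Qx) is at most 1; (ii) Q is dissipative, i.e. ⟨Qa, a⟩ ≤ 0 for all a ∈ ℝⁿ with the Euclidean inner product. -/

import Mathlib

open Real Matrix
open scoped Matrix.Norms.L2Operator

section aux

variable {n : ℕ}

/-- `M ↦ M *ᵥ a` as a continuous linear map into Euclidean space. -/
noncomputable def mulVecCLM (n : ℕ) (a : Fin n → ℝ) :
    Matrix (Fin n) (Fin n) ℝ →L[ℝ] EuclideanSpace ℝ (Fin n) :=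
  LinearMap.toContinuousLinearMap
    { toFun := fun M => (EuclideanSpace.equiv (Fin n) ℝ).symm (M.mulVec a)
      map_add' := fun M N => by simp [Matrix.add_mulVec]
      map_smul' := fun c M => by simp [Matrix.smul_mulVec] }

lemma mulVecCLM_apply (n : ℕ) (a : Fin n → ℝ) (M : Matrix (Fin n) (Fin n) ℝ) :
    mulVecCLM n a M = (EuclideanSpace.equiv (Fin n) ℝ).symm (M.mulVec a) := rfl

lemma hasDerivAt_expVec (Q : Matrix (Fin n) (Fin n) ℝ) (a : Fin n → ℝ) (x : ℝ) :
    HasDerivAt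
      (fun t : ℝ => (EuclideanSpace.equiv (Fin n) ℝ).symm
        ((NormedSpace.exp (t • Q)).mulVec a))
      ((EuclideanSpace.equiv (Fin n) ℝ).symm
        (Q.mulVec ((NormedSpace.exp (x • Q)).mulVec a))) x := by
  have h := hasDerivAt_exp_smul_const' (𝕂 := ℝ) Q x
  have h2 := ((mulVecCLM n a).hasFDerivAt.comp_hasDerivAt x h)
  simp [mulVecCLM_apply, ← Matrix.mulVec_mulVec] at h2
  exact h2

end aux

/-- Lumer–Phillips theorem for matrices: the semigroup `exp(Qx)` is contractive in the
Euclidean operator norm for all `x ≥ 0` iff `Q` is dissipative. -/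
theorem lumer_phillips (n : ℕ) (Q : Matrix (Fin n) (Fin n) ℝ) :
    (∀ x : ℝ, 0 ≤ x → ‖NormedSpace.exp (x • Q)‖ ≤ 1) ↔
      (∀ a : Fin n → ℝ, Q.mulVec a ⬝ᵥ a ≤ 0) := by
  constructor
  · intro hC a
    set e := (EuclideanSpace.equiv (Fin n) ℝ).symm with he
    set v : ℝ → EuclideanSpace ℝ (Fin n) :=
      fun t => e ((NormedSpace.exp (t • Q)).mulVec a) with hv
    set f : ℝ → ℝ := fun t => inner ℝ (v t) (v t) with hf
    have hv' : ∀ x, HasDerivAt v (e (Q.mulVec ((NormedSpace.exp (x • Q)).mulVec a))) x :=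
      fun x => hasDerivAt_expVec Q a x
    have hfd : HasDerivAt f (2 * inner ℝ (e (Q.mulVec a)) (e a)) 0 := by
      have := (hv' 0).inner ℝ (hv' 0)
      simp only [hf]
      refine this.congr_deriv ?_
      have hv0 : v 0 = e a := by simp [hv]
      have : e (Q.mulVec ((NormedSpace.exp ((0:ℝ) • Q)).mulVec a)) = e (Q.mulVec a) := by
        simp
      rw [hv0, this, real_inner_comm (e (Q.mulVec a)) (e a)]
      ring
    have hle : ∀ x ∈ Set.Ioi (0:ℝ), f x ≤ f 0 := by
      intro x hx
      have h1 : ‖v x‖ ≤ ‖e a‖ := by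
        calc ‖v x‖ ≤ ‖NormedSpace.exp (x • Q)‖ * ‖e a‖ :=
              Matrix.l2_opNorm_mulVec _ (e a)
          _ ≤ 1 * ‖e a‖ := by
              gcongr; exact hC x (le_of_lt hx)
          _ = ‖e a‖ := one_mul _
      have hv0 : v 0 = e a := by simp [hv]
      simp only [hf, real_inner_self_eq_norm_sq, hv0]
      exact pow_le_pow_left₀ (norm_nonneg _) h1 2
    -- slope argument
    have hslope : Filter.Tendsto (slope f 0) (nhdsWithin 0 (Set.Ioi 0)) 
        (nhds (2 * inner ℝ (e (Q.mulVec a)) (e a))) := by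
      have := hasDerivAt_iff_tendsto_slope.mp hfd
      exact this.mono_left (nhdsWithin_mono _ (fun x hx => ne_of_gt hx))
    have hkey : 2 * (inner ℝ (e (Q.mulVec a)) (e a) : ℝ) ≤ 0 := by
      refine le_of_tendsto hslope ?_
      filter_upwards [self_mem_nhdsWithin] with x hx
      rw [slope_def_field]
      apply div_nonpos_of_nonpos_of_nonneg
      · simpa using sub_nonpos.mpr (hle x hx)
      · simpa using le_of_lt hx
    have hinner : (inner ℝ (e (Q.mulVec a)) (e a) : ℝ) = Q.mulVec a ⬝ᵥ a := by
      simp [PiLp.inner_apply, dotProduct, RCLike.inner_apply, he, mul_comm]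
    linarith [hkey, hinner ▸ hkey]
  · intro hD x hx
    set e := (EuclideanSpace.equiv (Fin n) ℝ).symm with he
    -- show mulVec is norm-nonincreasing
    have key : ∀ a : Fin n → ℝ, ‖e ((NormedSpace.exp (x • Q)).mulVec a)‖ ≤ ‖e a‖ := by
      intro a
      set v : ℝ → EuclideanSpace ℝ (Fin n) :=
        fun t => e ((NormedSpace.exp (t • Q)).mulVec a) with hv
      set f : ℝ → ℝ := fun t => inner ℝ (v t) (v t) with hf
      have hv' : ∀ y, HasDerivAt v (e (Q.mulVec ((NormedSpace.exp (y • Q)).mulVec a))) y :=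
        fun y => hasDerivAt_expVec Q a y
      have hfd : ∀ y, HasDerivAt f
          (2 * inner ℝ (e (Q.mulVec ((NormedSpace.exp (y • Q)).mulVec a))) (v y)) y := by
        intro y
        have := (hv' y).inner ℝ (hv' y)
        refine this.congr_deriv ?_
        rw [real_inner_comm]
        ring
      have hanti : Antitone f := by
        apply antitone_of_deriv_nonpos
        · exact fun y => (hfd y).differentiableAt
        · intro y
          rw [(hfd y).deriv]
          have : (inner ℝ (e (Q.mulVec ((NormedSpace.exp (y • Q)).mulVec a))) (v y) : ℝ)
              = Q.mulVec ((NormedSpace.exp (y • Q)).mulVec a) ⬝ᵥ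
                ((NormedSpace.exp (y • Q)).mulVec a) := by
            simp [PiLp.inner_apply, dotProduct, RCLike.inner_apply, he, hv, mul_comm]
          rw [this]
          linarith [hD ((NormedSpace.exp (y • Q)).mulVec a)]
      have h0 : f x ≤ f 0 := hanti hx
      have hv0 : v 0 = e a := by simp [hv]
      simp only [hf, real_inner_self_eq_norm_sq, hv0] at h0
      have := norm_nonneg (v x)
      nlinarith [norm_nonneg (e a)]
    rw [Matrix.l2_opNorm_def]
    apply ContinuousLinearMap.opNorm_le_bound _ zero_le_one
    intro y
    rw [one_mul]
    have happ : (toEuclideanLin.trans LinearMap.toContinuousLinearMap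
        (NormedSpace.exp (x • Q))) y
        = e ((NormedSpace.exp (x • Q)).mulVec (EuclideanSpace.equiv (Fin n) ℝ y)) := rfl
    rw [happ]
    have := key (EuclideanSpace.equiv (Fin n) ℝ y)
    simpa [he] using this
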